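/- Let p > 1, τ ∈ [1−p, 1), C ≥ 1, ε > 0, and let Φ, Ψ : (0,∞) → (0,∞) satisfy C^{-1}(r/R)^{τ} Φ(R)/Φ(r) ≤ Ψ(R)/Ψ(r) for all 0 < r ≤ R. Define Φ^{(ε)}(r) = Φ(ε)·r/ε for r ≤ ε and Φ^{(ε)}(r) = Φ(r) for r > ε; and Ψ^{(ε)}(r) = Ψ(ε)·(r/ε)^p for r ≤ ε and Ψ^{(ε)}(r) = Ψ(r) for r > ε. Then C^{-1}(r/R)^{τ} Φ^{(ε)}(R)/Φ^{(ε)}(r) ≤ Ψ^{(ε)}(R)/Ψ^{(ε)}(r) for all 0 < r ≤ R. -/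

import Mathlib

lemma rsvr_key (p τ x : ℝ) (hτ1 : 1 - p ≤ τ) (hx : 1 ≤ x) :
    x⁻¹ ^ τ * x ≤ x ^ p := by
  have hx0 : 0 < x := lt_of_lt_of_le one_pos hx
  calc x⁻¹ ^ τ * x = x ^ (-τ) * x ^ (1 : ℝ) := by
        rw [Real.inv_rpow hx0.le, ← Real.rpow_neg hx0.le, Real.rpow_one]
    _ = x ^ (-τ + 1) := (Real.rpow_add hx0 _ _).symm
    _ ≤ x ^ p := Real.rpow_le_rpow_of_exponent_le hx (by linarith)

theorem rsvr_regularization (p τ C ε : ℝ) (hp : 1 < p) (hτ1 : 1 - p ≤ τ) (hτ2 : τ < 1)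
    (hC : 1 ≤ C) (hε : 0 < ε)
    (Φ Ψ : ℝ → ℝ) (hΦ : ∀ r : ℝ, 0 < r → 0 < Φ r) (hΨ : ∀ r : ℝ, 0 < r → 0 < Ψ r)
    (h : ∀ r R : ℝ, 0 < r → r ≤ R →
      C⁻¹ * (r / R) ^ τ * (Φ R / Φ r) ≤ Ψ R / Ψ r) :
    ∀ r R : ℝ, 0 < r → r ≤ R →
      C⁻¹ * (r / R) ^ τ *
          ((if R ≤ ε then Φ ε * R / ε else Φ R) /
            (if r ≤ ε then Φ ε * r / ε else Φ r)) ≤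
        (if R ≤ ε then Ψ ε * (R / ε) ^ p else Ψ R) /
          (if r ≤ ε then Ψ ε * (r / ε) ^ p else Ψ r) := by
  intro r R hr hrR
  have hR : 0 < R := hr.trans_le hrR
  have hC0 : (0:ℝ) < C := lt_of_lt_of_le one_pos hC
  have hΦε := hΦ ε hε
  have hΨε := hΨ ε hε
  by_cases h2 : R ≤ ε
  · have h1 : r ≤ ε := hrR.trans h2
    simp only [if_pos h1, if_pos h2]
    have hx : (1:ℝ) ≤ R / r := (one_le_div hr).mpr hrR
    have e1 : Φ ε * R / ε / (Φ ε * r / ε) = R / r := by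
      field_simp
    have e2 : Ψ ε * (R / ε) ^ p / (Ψ ε * (r / ε) ^ p) = (R / r) ^ p := by
      rw [mul_div_mul_left _ _ hΨε.ne', ← Real.div_rpow (by positivity) (by positivity)]
      congr 1
      field_simp
    rw [e1, e2]
    have key := rsvr_key p τ (R / r) hτ1 hx
    have hinv : (R / r)⁻¹ = r / R := by field_simp
    rw [hinv] at key
    have hC1 : C⁻¹ ≤ 1 := inv_le_one_of_one_le₀ hC
    have hnn : 0 ≤ (r / R) ^ τ * (R / r) := by positivity
    calc C⁻¹ * (r / R) ^ τ * (R / r) = C⁻¹ * ((r / R) ^ τ * (R / r)) := by ring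
      _ ≤ 1 * ((r / R) ^ τ * (R / r)) := mul_le_mul_of_nonneg_right hC1 hnn
      _ = (r / R) ^ τ * (R / r) := one_mul _
      _ ≤ (R / r) ^ p := key
  · push_neg at h2
    by_cases h1 : r ≤ ε
    · simp only [if_pos h1, if_neg (not_le.mpr h2)]
      have hΦR := hΦ R hR
      have hΨR := hΨ R hR
      have hεR := h ε R hε h2.le
      have hy : (1:ℝ) ≤ ε / r := (one_le_div hr).mpr h1
      have key := rsvr_key p τ (ε / r) hτ1 hy
      have hinv : (ε / r)⁻¹ = r / ε := by field_simp
      rw [hinv] at key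
      have eL : C⁻¹ * (r / R) ^ τ * (Φ R / (Φ ε * r / ε)) =
          (C⁻¹ * (ε / R) ^ τ * (Φ R / Φ ε)) * ((r / ε) ^ τ * (ε / r)) := by
        rw [show r / R = (ε / R) * (r / ε) by field_simp,
          Real.mul_rpow (by positivity) (by positivity)]
        field_simp
      have eR : Ψ R / (Ψ ε * (r / ε) ^ p) = (Ψ R / Ψ ε) * (ε / r) ^ p := by
        rw [show ε / r = (r / ε)⁻¹ by field_simp, Real.inv_rpow (by positivity)]
        field_simp
      rw [eL, eR]
      have hb : 0 ≤ (r / ε) ^ τ * (ε / r) := by positivity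
      have hd : 0 ≤ Ψ R / Ψ ε := by positivity
      exact mul_le_mul hεR key hb hd
    · simp only [if_neg h1, if_neg (not_le.mpr h2)]
      exact h r R hr hrR
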